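/- In a dual weak brace S, for all a, b ∈ S and every idempotent e, a · (b + e) = a · b + a · e, where a · b := -a + a ∘ b - b. -/
import Mathlib


/-- A weak brace: `(S,+)` and `(S,∘)` are inverse semigroups satisfying
`a ∘ (b + c) = a ∘ b - a + a ∘ c` and `a ∘ a⁻ = -a + a`. -/
class WeakBrace (S : Type*) where
  add : S → S → S
  mul : S → S → S
  neg : S → S
  inv : S → S
  add_assoc : ∀ a b c : S, add (add a b) c = add a (add b c)
  mul_assoc : ∀ a b c : S, mul (mul a b) c = mul a (mul b c)
  add_reg : ∀ a : S, add (add a (neg a)) a = a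
  neg_reg : ∀ a : S, add (add (neg a) a) (neg a) = neg a
  neg_unique : ∀ a x : S, add (add a x) a = a → add (add x a) x = x → x = neg a
  mul_reg : ∀ a : S, mul (mul a (inv a)) a = a
  inv_reg : ∀ a : S, mul (mul (inv a) a) (inv a) = inv a
  inv_unique : ∀ a x : S, mul (mul a x) a = a → mul (mul x a) x = x → x = inv a
  distrib : ∀ a b c : S, mul a (add b c) = add (add (mul a b) (neg a)) (mul a c)
  link : ∀ a : S, mul a (inv a) = add (neg a) a

/-- A dual weak brace: a weak brace whose multiplicative semigroup is Clifford. -/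
class DualWeakBrace (S : Type*) extends WeakBrace S where
  clifford : ∀ a : S, WeakBrace.mul a (WeakBrace.inv a) = WeakBrace.mul (WeakBrace.inv a) a

namespace WeakBrace

variable {S : Type*} [WeakBrace S]

/-- `λ_a(b) = -a + a ∘ b`. -/
def lam (a b : S) : S := add (neg a) (mul a b)

/-- `ρ_b(a) = (-a + a ∘ b)⁻ ∘ a ∘ b`. -/
def rho (b a : S) : S := mul (mul (inv (lam a b)) a) b

/-- `a · b = -a + a ∘ b - b`. -/
def cdot (a b : S) : S := add (add (neg a) (mul a b)) (neg b)

/-- `a⁰ = a - a`. -/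
def sq (a : S) : S := add a (neg a)

/-- Additive idempotent (the sets of idempotents of `+` and `∘` coincide). -/
def IsIdem (e : S) : Prop := add e e = e

/-- `[a,b]₊ = -a - b + a + b`. -/
def brkt (a b : S) : S := add (add (add (neg a) (neg b)) a) b

/-- `I` is a full inverse subsemigroup of `(S,+)`. -/
def IsFullAddSub (I : Set S) : Prop :=
  (∀ e : S, IsIdem e → e ∈ I) ∧ (∀ x ∈ I, ∀ y ∈ I, add x y ∈ I) ∧ (∀ x ∈ I, neg x ∈ I)

/-- `I` is a normal subsemigroup of `(S,+)`. -/
def IsNormalAdd (I : Set S) : Prop :=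
  IsFullAddSub I ∧ ∀ a : S, ∀ x ∈ I, add (add (neg a) x) a ∈ I

/-- `I` is a normal subsemigroup of `(S,∘)`. -/
def IsNormalMul (I : Set S) : Prop :=
  (∀ e : S, IsIdem e → e ∈ I) ∧ (∀ x ∈ I, ∀ y ∈ I, mul x y ∈ I) ∧ (∀ x ∈ I, inv x ∈ I) ∧
    ∀ a : S, ∀ x ∈ I, mul (mul (inv a) x) a ∈ I

/-- `I` is a left ideal of the weak brace `S`. -/
def IsLeftIdeal (I : Set S) : Prop :=
  IsFullAddSub I ∧ ∀ a : S, ∀ x ∈ I, lam a x ∈ I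

/-- `I` is an ideal of the weak brace `S`. -/
def IsIdeal (I : Set S) : Prop :=
  IsNormalAdd I ∧ (∀ a : S, ∀ x ∈ I, lam a x ∈ I) ∧ IsNormalMul I

/-- The socle `Soc(S)`. -/
def Soc (S : Type*) [WeakBrace S] : Set S :=
  {a | ∀ b : S, add a b = mul a b ∧ add a b = add b a}

/-- The annihilator `Ann(S)`. -/
def Ann (S : Type*) [WeakBrace S] : Set S :=
  {a | ∀ b : S, add a b = add b a ∧ add a b = mul a b ∧ mul a b = mul b a}

/-- The congruence `a ∼_I b ⟺ a⁰ = b⁰ and -a + b ∈ I` associated to an ideal `I`. -/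
def simI (I : Set S) (a b : S) : Prop := sq a = sq b ∧ add (neg a) b ∈ I

/-- Membership in the inverse subsemigroup of `(S,+)` generated by a set `X`. -/
inductive genAdd (X : Set S) : S → Prop
  | base : ∀ x ∈ X, genAdd X x
  | add : ∀ a b : S, genAdd X a → genAdd X b → genAdd X (add a b)
  | neg : ∀ a : S, genAdd X a → genAdd X (neg a)

/-- `X · Y`: the additive inverse subsemigroup generated by the elements `x · y`. -/
def cdotSet (X Y : Set S) : Set S :=
  {s | genAdd {z | ∃ x ∈ X, ∃ y ∈ Y, z = cdot x y} s}

/-- `S^(n)` for `n ≥ 1`: `S^(1) = S`, `S^(n+1) = S^(n) · S`. -/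
def Spow (S : Type*) [WeakBrace S] : ℕ → Set S
  | 0 => Set.univ
  | 1 => Set.univ
  | (n+2) => cdotSet (Spow S (n+1)) Set.univ

end WeakBrace


namespace WBProof

section Aux
variable {S : Type*} [WeakBrace S]

local infixl:65 " ⊹ " => WeakBrace.add
local infixl:70 " ⊚ " => WeakBrace.mul
local prefix:max "∸" => WeakBrace.neg

open WeakBrace (IsIdem)

lemma asc (a b c : S) : (a ⊹ b) ⊹ c = a ⊹ (b ⊹ c) := WeakBrace.add_assoc a b c
lemma areg (a : S) : (a ⊹ ∸a) ⊹ a = a := WeakBrace.add_reg a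
lemma nreg (a : S) : (∸a ⊹ a) ⊹ ∸a = ∸a := WeakBrace.neg_reg a
lemma nuniq (a x : S) (h1 : (a ⊹ x) ⊹ a = a) (h2 : (x ⊹ a) ⊹ x = x) : x = ∸a :=
  WeakBrace.neg_unique a x h1 h2

lemma reg1 (a : S) : a ⊹ (∸a ⊹ a) = a := by rw [← asc]; exact areg a
lemma reg2 (a : S) : ∸a ⊹ (a ⊹ ∸a) = ∸a := by rw [← asc]; exact nreg a
lemma creg1 (a t : S) : a ⊹ (∸a ⊹ (a ⊹ t)) = a ⊹ t := by
  rw [← asc, ← asc, areg]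
lemma creg2 (a t : S) : ∸a ⊹ (a ⊹ (∸a ⊹ t)) = ∸a ⊹ t := by
  rw [← asc, ← asc, nreg]

lemma wb_neg_neg (a : S) : ∸(∸a) = a := (nuniq (∸a) a (nreg a) (areg a)).symm

lemma cidem {e : S} (he : IsIdem e) (t : S) : e ⊹ (e ⊹ t) = e ⊹ t := by
  rw [← asc]; rw [show e ⊹ e = e from he]

lemma isIdem_sq (a : S) : IsIdem (a ⊹ ∸a) := by
  show (a ⊹ ∸a) ⊹ (a ⊹ ∸a) = a ⊹ ∸a
  rw [← asc, areg]
lemma isIdem_eps (a : S) : IsIdem (∸a ⊹ a) := by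
  show (∸a ⊹ a) ⊹ (∸a ⊹ a) = ∸a ⊹ a
  rw [← asc, nreg]

lemma isIdem_add {e f : S} (he : IsIdem e) (hf : IsIdem f) : IsIdem (e ⊹ f) := by
  have he' : e ⊹ e = e := he
  have hf' : f ⊹ f = f := hf
  set s := e ⊹ f with hs
  set x := ∸s with hx
  set y := f ⊹ (x ⊹ e) with hy
  have hxs : ∀ t : S, x ⊹ (e ⊹ (f ⊹ (x ⊹ t))) = x ⊹ t := by
    intro t
    rw [show e ⊹ (f ⊹ (x ⊹ t)) = s ⊹ (x ⊹ t) by rw [hs, asc], ← asc, ← asc, hx, nreg]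
  have hyidem : y ⊹ y = y := by
    calc y ⊹ y = f ⊹ (x ⊹ (e ⊹ (f ⊹ (x ⊹ e)))) := by simp only [hy, asc]
    _ = f ⊹ (x ⊹ e) := by rw [hxs]
  have c1 : (s ⊹ y) ⊹ s = s := by
    calc (s ⊹ y) ⊹ s = e ⊹ (f ⊹ (f ⊹ (x ⊹ (e ⊹ (e ⊹ f))))) := by
          simp only [hs, hy, asc]
    _ = e ⊹ (f ⊹ (x ⊹ (e ⊹ f))) := by rw [cidem hf, cidem he]
    _ = (s ⊹ x) ⊹ s := by simp only [hs, asc]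
    _ = s := by rw [hx]; exact areg s
  have c2 : (y ⊹ s) ⊹ y = y := by
    calc (y ⊹ s) ⊹ y = f ⊹ (x ⊹ (e ⊹ (e ⊹ (f ⊹ (f ⊹ (x ⊹ e)))))) := by
          simp only [hy, hs, asc]
    _ = f ⊹ (x ⊹ (e ⊹ (f ⊹ (x ⊹ e)))) := by rw [cidem he, cidem hf]
    _ = f ⊹ (x ⊹ e) := by rw [hxs]
  have hsy : s = ∸y := nuniq y s c2 c1
  have hyy : y = ∸y := nuniq y y (by rw [hyidem]; exact hyidem) (by rw [hyidem]; exact hyidem)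
  have hsey : s = y := by rw [hsy, ← hyy]
  show s ⊹ s = s
  rw [hsey]; exact hyidem

lemma idem_comm {e f : S} (he : IsIdem e) (hf : IsIdem f) : e ⊹ f = f ⊹ e := by
  have hs : (e ⊹ f) ⊹ (e ⊹ f) = e ⊹ f := isIdem_add he hf
  have ht : (f ⊹ e) ⊹ (f ⊹ e) = f ⊹ e := isIdem_add hf he
  have c1 : ((e ⊹ f) ⊹ (f ⊹ e)) ⊹ (e ⊹ f) = e ⊹ f := by
    calc ((e ⊹ f) ⊹ (f ⊹ e)) ⊹ (e ⊹ f) = e ⊹ (f ⊹ (f ⊹ (e ⊹ (e ⊹ f)))) := by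
          simp only [asc]
    _ = e ⊹ (f ⊹ (e ⊹ f)) := by rw [cidem hf, cidem he]
    _ = (e ⊹ f) ⊹ (e ⊹ f) := by simp only [asc]
    _ = e ⊹ f := hs
  have c2 : ((f ⊹ e) ⊹ (e ⊹ f)) ⊹ (f ⊹ e) = f ⊹ e := by
    calc ((f ⊹ e) ⊹ (e ⊹ f)) ⊹ (f ⊹ e) = f ⊹ (e ⊹ (e ⊹ (f ⊹ (f ⊹ e)))) := by
          simp only [asc]
    _ = f ⊹ (e ⊹ (f ⊹ e)) := by rw [cidem he, cidem hf]
    _ = (f ⊹ e) ⊹ (f ⊹ e) := by simp only [asc]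
    _ = f ⊹ e := ht
  have h1 : f ⊹ e = ∸(e ⊹ f) := nuniq (e ⊹ f) (f ⊹ e) c1 c2
  have h2 : e ⊹ f = ∸(e ⊹ f) := nuniq (e ⊹ f) (e ⊹ f) (by rw [hs]; exact hs) (by rw [hs]; exact hs)
  rw [h2, ← h1]

lemma neg_of_idem {e : S} (he : IsIdem e) : ∸e = e := by
  have he' : e ⊹ e = e := he
  exact (nuniq e e (by rw [he']; exact he') (by rw [he']; exact he')).symm

lemma wb_neg_add (a b : S) : ∸(a ⊹ b) = ∸b ⊹ ∸a := by
  have hsq : IsIdem (b ⊹ ∸b) := isIdem_sq b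
  have heps : IsIdem (∸a ⊹ a) := isIdem_eps a
  have c1 : ((a ⊹ b) ⊹ (∸b ⊹ ∸a)) ⊹ (a ⊹ b) = a ⊹ b := by
    calc ((a ⊹ b) ⊹ (∸b ⊹ ∸a)) ⊹ (a ⊹ b)
        = a ⊹ ((b ⊹ ∸b) ⊹ ((∸a ⊹ a) ⊹ b)) := by simp only [asc]
    _ = a ⊹ ((∸a ⊹ a) ⊹ ((b ⊹ ∸b) ⊹ b)) := by
          rw [← asc (b ⊹ ∸b), idem_comm hsq heps, asc]
    _ = a ⊹ ((∸a ⊹ a) ⊹ b) := by rw [areg]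
    _ = a ⊹ (∸a ⊹ (a ⊹ b)) := by rw [asc]
    _ = a ⊹ b := creg1 a b
  have c2 : ((∸b ⊹ ∸a) ⊹ (a ⊹ b)) ⊹ (∸b ⊹ ∸a) = ∸b ⊹ ∸a := by
    calc ((∸b ⊹ ∸a) ⊹ (a ⊹ b)) ⊹ (∸b ⊹ ∸a)
        = ∸b ⊹ ((∸a ⊹ a) ⊹ ((b ⊹ ∸b) ⊹ ∸a)) := by simp only [asc]
    _ = ∸b ⊹ ((b ⊹ ∸b) ⊹ ((∸a ⊹ a) ⊹ ∸a)) := by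
          rw [← asc (∸a ⊹ a), idem_comm heps hsq, asc]
    _ = ∸b ⊹ ((b ⊹ ∸b) ⊹ ∸a) := by rw [nreg]
    _ = ∸b ⊹ (b ⊹ (∸b ⊹ ∸a)) := by rw [asc]
    _ = ∸b ⊹ ∸a := creg2 b ∸a
  exact (nuniq (a ⊹ b) (∸b ⊹ ∸a) c1 c2).symm

end Aux


section Aux2
variable {S : Type*} [WeakBrace S]

local infixl:65 " ⊹ " => WeakBrace.add
local infixl:70 " ⊚ " => WeakBrace.mul
local prefix:max "∸" => WeakBrace.neg

open WeakBrace (IsIdem lam)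

lemma dst (a u v : S) : a ⊚ (u ⊹ v) = ((a ⊚ u) ⊹ ∸a) ⊹ (a ⊚ v) := WeakBrace.distrib a u v

lemma lam_hom (a b c : S) : lam a (b ⊹ c) = lam a b ⊹ lam a c := by
  show ∸a ⊹ (a ⊚ (b ⊹ c)) = (∸a ⊹ (a ⊚ b)) ⊹ (∸a ⊹ (a ⊚ c))
  rw [dst]; simp only [asc]

lemma mul_lam (a u v : S) : (a ⊚ u) ⊹ lam a v = a ⊚ (u ⊹ v) := by
  show (a ⊚ u) ⊹ (∸a ⊹ (a ⊚ v)) = a ⊚ (u ⊹ v)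
  rw [dst, asc]

lemma lam_neg (a b : S) : lam a ∸b = ∸(lam a b) := by
  apply nuniq
  · rw [← lam_hom, ← lam_hom, areg]
  · rw [← lam_hom, ← lam_hom, nreg]

lemma wb_neg_mul (a c : S) : ∸(a ⊚ c) = lam a ∸c ⊹ ∸a := by
  have key : ∀ u v : S, ((a ⊚ u) ⊹ (lam a v ⊹ ∸a)) ⊹ (a ⊚ u) = a ⊚ ((u ⊹ v) ⊹ u) := by
    intro u v
    rw [← asc (a ⊚ u), mul_lam, asc, show ∸a ⊹ (a ⊚ u) = lam a u from rfl, mul_lam]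
  have c1 : ((a ⊚ c) ⊹ (lam a ∸c ⊹ ∸a)) ⊹ (a ⊚ c) = a ⊚ c := by
    rw [key, areg]
  have c2 : ((lam a ∸c ⊹ ∸a) ⊹ (a ⊚ c)) ⊹ (lam a ∸c ⊹ ∸a) = lam a ∸c ⊹ ∸a := by
    have h1 : (lam a ∸c ⊹ ∸a) ⊹ (a ⊚ c) = lam a (∸c ⊹ c) := by
      rw [asc, show ∸a ⊹ (a ⊚ c) = lam a c from rfl, ← lam_hom]
    rw [h1, ← asc, ← lam_hom, nreg]
  exact (nuniq (a ⊚ c) (lam a ∸c ⊹ ∸a) c1 c2).symm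

lemma sq_mul (a c : S) : (a ⊚ c) ⊹ ∸(a ⊚ c) = (a ⊚ (c ⊹ ∸c)) ⊹ ∸a := by
  rw [wb_neg_mul, ← asc, mul_lam]

/-- `(S,+)` is Clifford. -/
lemma wb_clifford_add (a : S) : a ⊹ ∸a = ∸a ⊹ a := by
  have q1 : ∀ b : S, ∸b ⊹ b = (∸b ⊹ b) ⊹ (b ⊹ ∸b) := by
    intro b
    have heps : IsIdem (∸b ⊹ b) := isIdem_eps b
    have hlink : b ⊚ WeakBrace.inv b = ∸b ⊹ b := WeakBrace.link b
    have hX : b ⊚ (WeakBrace.inv b ⊹ ∸(WeakBrace.inv b)) = (∸b ⊹ b) ⊹ b := by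
      have h1 : b ⊚ (WeakBrace.inv b ⊹ ∸(WeakBrace.inv b))
          = (b ⊚ WeakBrace.inv b) ⊹ lam b ∸(WeakBrace.inv b) := (mul_lam _ _ _).symm
      rw [h1, lam_neg, hlink]
      have h2 : lam b (WeakBrace.inv b) = ∸b ⊹ (∸b ⊹ b) := by
        show ∸b ⊹ (b ⊚ WeakBrace.inv b) = ∸b ⊹ (∸b ⊹ b)
        rw [hlink]
      rw [h2, wb_neg_add, wb_neg_neg, neg_of_idem heps]
      simp only [← asc]
      rw [nreg]
    have hsqm := sq_mul b (WeakBrace.inv b)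
    rw [hlink, neg_of_idem heps, show (∸b ⊹ b) ⊹ (∸b ⊹ b) = ∸b ⊹ b from isIdem_eps b] at hsqm
    have hfin : ∸b ⊹ b = ((∸b ⊹ b) ⊹ b) ⊹ ∸b := hsqm.trans (by rw [hX])
    refine hfin.trans ?_
    exact asc (∸b ⊹ b) b ∸b
  have q2 : a ⊹ ∸a = (a ⊹ ∸a) ⊹ (∸a ⊹ a) := by
    have := q1 ∸a
    rwa [wb_neg_neg] at this
  rw [q2, idem_comm (isIdem_sq a) (isIdem_eps a), ← q1]

lemma idem_central {e : S} (he : IsIdem e) (a : S) : a ⊹ e = e ⊹ a := by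
  have hsq : IsIdem (a ⊹ ∸a) := isIdem_sq a
  have n1 : ∸(e ⊹ a) = ∸a ⊹ e := by rw [wb_neg_add, neg_of_idem he]
  have hc := wb_clifford_add (e ⊹ a)
  rw [n1] at hc
  -- hc : (e ⊹ a) ⊹ (∸a ⊹ e) = (∸a ⊹ e) ⊹ (e ⊹ a)
  have lhs1 : (e ⊹ a) ⊹ (∸a ⊹ e) = (a ⊹ ∸a) ⊹ e := by
    calc (e ⊹ a) ⊹ (∸a ⊹ e) = (e ⊹ (a ⊹ ∸a)) ⊹ e := by simp only [asc]
    _ = ((a ⊹ ∸a) ⊹ e) ⊹ e := by rw [idem_comm he hsq]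
    _ = (a ⊹ ∸a) ⊹ (e ⊹ e) := by rw [asc]
    _ = (a ⊹ ∸a) ⊹ e := by rw [show e ⊹ e = e from he]
  have rhs1 : (∸a ⊹ e) ⊹ (e ⊹ a) = ∸a ⊹ (e ⊹ a) := by
    rw [asc, cidem he]
  rw [lhs1, rhs1] at hc
  -- hc : (a ⊹ ∸a) ⊹ e = ∸a ⊹ (e ⊹ a)
  have ha : a ⊹ (a ⊹ ∸a) = a := by rw [wb_clifford_add, reg1]
  calc a ⊹ e = (a ⊹ (a ⊹ ∸a)) ⊹ e := by rw [ha]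
  _ = a ⊹ ((a ⊹ ∸a) ⊹ e) := by rw [asc]
  _ = a ⊹ (∸a ⊹ (e ⊹ a)) := by rw [hc]
  _ = ((a ⊹ ∸a) ⊹ e) ⊹ a := by simp only [asc]
  _ = (e ⊹ (a ⊹ ∸a)) ⊹ a := by rw [idem_comm hsq he]
  _ = e ⊹ ((a ⊹ ∸a) ⊹ a) := by rw [asc]
  _ = e ⊹ a := by rw [areg]

lemma lam_idem {e : S} (he : IsIdem e) (a : S) : IsIdem (lam a e) := by
  show lam a e ⊹ lam a e = lam a e
  rw [← lam_hom, show e ⊹ e = e from he]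

end Aux2

end WBProof

local infixl:65 " ⊹ " => WeakBrace.add
local infixl:70 " ⊚ " => WeakBrace.mul
local prefix:max "∸" => WeakBrace.neg

open WBProof

open WeakBrace
theorem stmt7 {S : Type*} [DualWeakBrace S] (a b e : S) (he : IsIdem e) :
    cdot a (add b e) = add (cdot a b) (cdot a e) := by
  show lam a (add b e) ⊹ ∸(b ⊹ e) = (lam a b ⊹ ∸b) ⊹ (lam a e ⊹ ∸e)
  have hg : IsIdem (lam a e ⊹ e) := isIdem_add (lam_idem he a) he
  rw [lam_hom, wb_neg_add, neg_of_idem he]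
  calc (lam a b ⊹ lam a e) ⊹ (e ⊹ ∸b)
      = lam a b ⊹ ((lam a e ⊹ e) ⊹ ∸b) := by simp only [asc]
  _ = lam a b ⊹ (∸b ⊹ (lam a e ⊹ e)) := by rw [← idem_central hg ∸b]
  _ = (lam a b ⊹ ∸b) ⊹ (lam a e ⊹ e) := by rw [← asc]
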